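/- Let P be a directed path in T (the maximal-label functional subgraph of the de Bruijn graph of span n rooted at the maximum vertex m) starting at a floor vertex (a vertex u with g(u) = ε), ending at a vertex v, such that all inner vertices of P are unrestricted (γ = α). Then the label of P equals g(v). -/

import Mathlib

/-- Let `P = v 0, v 1, …, v len` be a directed path in the maximal-label functional
subgraph `T` of the de Bruijn graph of span `n` (rooted at the maximal vertex `m`),
starting at a floor vertex (`g (v 0) = ε`) and such that all non-final vertices of `P`
are unrestricted (`γ = α`). Then the label `γ (v 0) ⋯ γ (v (len-1))` of `P`
equals `g (v len)`. -/
theorem path_label_eq_g {A : Type*} [LinearOrder A] (n len : ℕ)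
    (L V : Set (List A)) (m : List A) (g : List A → List A) (α γ : List A → A)
    (v : ℕ → List A)
    (hV : ∀ u ∈ V, u.length = n)
    (harc : ∀ u ∈ V, ∀ b : A, u ++ [b] ∈ L → u.tail ++ [b] ∈ V)
    (hext : ∀ x ∈ V, ∀ s : List A, s <:+ x → ∃ y ∈ V, s <+: y)
    (hm : m ∈ V)
    (hmax : ∀ u ∈ V, u = m ∨ List.Lex (· < ·) u m)
    (hg : ∀ u ∈ V, g u <+: m ∧ g u <:+ u ∧
      ∀ s : List A, s <+: m → s <:+ u → s.length ≤ (g u).length)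
    (hglen : ∀ u ∈ V, u ≠ m → (g u).length < n)
    (hα : ∀ u ∈ V, u ≠ m → g u ++ [α u] <+: m)
    -- v is a path of T: each arc is the maximal-label outgoing arc
    (hvV : ∀ i ≤ len, v i ∈ V)
    (hvm : ∀ i < len, v i ≠ m)
    (hγmax : ∀ i < len, ∀ b : A, (v i) ++ [b] ∈ L → b ≤ γ (v i))
    (hstep : ∀ i < len, (v i) ++ [γ (v i)] ∈ L ∧ v (i + 1) = (v i).tail ++ [γ (v i)])
    -- the path starts at a floor vertex
    (hfloor : g (v 0) = [])
    -- all non-final vertices are unrestricted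
    (hunres : ∀ i < len, γ (v i) = α (v i)) :
    (List.range len).map (fun i => γ (v i)) = g (v len) := by
  suffices h : ∀ i, i ≤ len → (List.range i).map (fun j => γ (v j)) = g (v i) from
    h len le_rfl
  intro i
  induction i with
  | zero => intro _; simp [hfloor]
  | succ i ih =>
    intro hi1
    have hil : i < len := hi1
    have ihe := ih hil.le
    rw [List.range_succ, List.map_append]
    set u := v i with hu
    set b := γ (v i) with hb
    have huV : u ∈ V := hvV i hil.le
    have hune : u ≠ m := hvm i hil
    have hgu := hg u huV
    have hlen : (g u).length < u.length := by
      rw [hV u huV]; exact hglen u huV hune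
    have h1 : g u ++ [b] <+: m := by
      rw [hb, hunres i hil]; exact hα u huV hune
    -- g u is a suffix of u.tail
    obtain ⟨p, hp⟩ := hgu.2.1
    have hpne : p ≠ [] := by
      intro hpn; rw [hpn, List.nil_append] at hp
      rw [hp] at hlen; exact lt_irrefl _ hlen
    have htail : p.tail ++ g u = u.tail := by
      cases p with
      | nil => exact absurd rfl hpne
      | cons a p' =>
        conv_rhs => rw [← hp]
        simp
    have hsuf : g u ++ [b] <:+ u.tail ++ [b] :=
      ⟨p.tail, by rw [← List.append_assoc, htail]⟩
    have hu'eq : v (i + 1) = u.tail ++ [b] := (hstep i hil).2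
    have hu'V : v (i + 1) ∈ V := hvV (i + 1) hi1
    have hgu' := hg (v (i + 1)) hu'V
    -- lower bound
    have hlow : (g u).length + 1 ≤ (g (v (i + 1))).length := by
      have := hgu'.2.2 (g u ++ [b]) h1 (hu'eq ▸ hsuf)
      simpa using this
    -- upper bound
    have hne : g (v (i + 1)) ≠ [] := by
      intro hc; rw [hc] at hlow; simp at hlow
    have hdl : g (v (i + 1)) = (g (v (i + 1))).dropLast ++ [(g (v (i + 1))).getLast hne] :=
      (List.dropLast_append_getLast hne).symm
    set t := (g (v (i + 1))).dropLast with ht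
    have htpre : t <+: m := List.IsPrefix.trans ⟨[(g (v (i + 1))).getLast hne], hdl.symm⟩ hgu'.1
    set c := (g (v (i + 1))).getLast hne with hc
    have htsuf : t <:+ u := by
      obtain ⟨q, hq⟩ := hgu'.2.1
      rw [hdl, hu'eq, ← List.append_assoc] at hq
      have h2 := List.append_inj' hq rfl
      have htl : q ++ t = u.tail := h2.1
      refine List.IsSuffix.trans ⟨q, htl⟩ ?_
      exact ⟨[u.head (by intro hn; rw [hn] at hlen; simp at hlen)],
        by simp [List.cons_head_tail]⟩
    have hup : (g (v (i + 1))).length ≤ (g u).length + 1 := by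
      have := hgu.2.2 t htpre htsuf
      have hlt : (g (v (i + 1))).length = t.length + 1 := by
        rw [hdl]; simp
      omega
    have hleq : (g (v (i + 1))).length = (g u ++ [b]).length := by
      simp; omega
    -- both prefixes of m with equal length
    have : g (v (i + 1)) = g u ++ [b] := by
      rcases List.prefix_or_prefix_of_prefix hgu'.1 h1 with h | h
      · exact h.eq_of_length hleq
      · exact (h.eq_of_length hleq.symm).symm
    rw [this, ← ihe]; simp [hb]
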